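/- Let m ≥ 2 and let a₁, a₂ be integers. For 0 ≤ l < m let G_l = θ^l G₀ be the l-th branch of the m-th root (θ = e^{2πi/m}, G₀ the principal branch), and define 𝔊^l_{a₁,a₂}(u,s) := ∫_{-1}^{u} G_l(v + is)^{-a₁} conj(G_l(v + is))^{-a₂} dv for (u,s) ∈ [-1,1]² ∖ ([0,1]×{0}). Then a₁ 𝔊^l_{a₁+m,a₂}(1,s) + a₂ 𝔊^l_{a₁,a₂+m}(1,s) = m (G_l(−1+is)^{-a₁} conj(G_l(−1+is))^{-a₂} − G_l(1+is)^{-a₁} conj(G_l(1+is))^{-a₂}) for all s ∈ [-1,1] ∖ {0}; in particular s ↦ a₁𝔊^l_{a₁+m,a₂}(1,s) + a₂𝔊^l_{a₁,a₂+m}(1,s) extends real-analytically to (0,1] and to [-1,0). -/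

import Mathlib

/-- The argument of a complex number, taken in `[0, 2π)`. -/
noncomputable def argTwoPi (z : ℂ) : ℝ := if 0 ≤ z.arg then z.arg else z.arg + 2 * Real.pi

/-- The principal branch `G₀` of the `m`-th root:
`G₀(r e^{it}) = r^{1/m} e^{it/m}` for `t ∈ [0, 2π)`. -/
noncomputable def rootBranch (m : ℕ) (z : ℂ) : ℂ :=
  ((‖z‖ ^ ((1 : ℝ) / m) : ℝ) : ℂ) * Complex.exp (Complex.I * ((argTwoPi z / m : ℝ) : ℂ))

/-- The `l`-th branch `G_l = θ^l G₀` of the `m`-th root, where `θ = e^{2πi/m}`. -/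
noncomputable def Gl (m l : ℕ) (z : ℂ) : ℂ :=
  Complex.exp (2 * (Real.pi : ℂ) * Complex.I / m) ^ l * rootBranch m z

/-- The function `𝔊^l_{a₁,a₂}(u,s) = ∫_{-1}^u G_l(v+is)^{-a₁} conj(G_l(v+is))^{-a₂} dv`. -/
noncomputable def frakG (m l : ℕ) (a₁ a₂ : ℤ) (u s : ℝ) : ℂ :=
  ∫ v in (-1:ℝ)..u,
    Gl m l ((v : ℂ) + Complex.I * (s : ℂ)) ^ (-a₁) *
      (starRingEnd ℂ) (Gl m l ((v : ℂ) + Complex.I * (s : ℂ))) ^ (-a₂)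

open Complex

/-- Auxiliary exponential form of the integrand. -/
noncomputable def fF (m : ℕ) (a₁ a₂ : ℤ) (w z₁ z₂ : ℂ) : ℂ :=
  Complex.exp ((-a₁ : ℂ) * (w + Complex.log z₁ / m) + (-a₂ : ℂ) * (-w + Complex.log z₂ / m))

lemma rootBranch_eq_exp (m : ℕ) (z : ℂ) (hz : z ≠ 0) :
    rootBranch m z = Complex.exp ((Real.log ‖z‖ / m : ℝ)
      + Complex.I * ((argTwoPi z / m : ℝ) : ℂ)) := by
  have habs : 0 < ‖z‖ := norm_pos_iff.mpr hz
  rw [rootBranch, Complex.exp_add]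
  congr 1
  rw [Real.rpow_def_of_pos habs, ← Complex.ofReal_exp]
  norm_num [mul_comm, div_eq_mul_inv]

lemma gl_eq_pos (m : ℕ) (hm : m ≠ 0) (l : ℕ) (z : ℂ) (hz : 0 < z.im) :
    Gl m l z = Complex.exp (2 * (Real.pi : ℂ) * Complex.I * l / m + Complex.log z / m) := by
  have hz0 : z ≠ 0 := fun h => by simp [h] at hz
  have harg : argTwoPi z = z.arg := by
    rw [argTwoPi, if_pos (Complex.arg_nonneg_iff.2 hz.le)]
  rw [Gl, rootBranch_eq_exp m z hz0, ← Complex.exp_nat_mul, ← Complex.exp_add, harg]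
  congr 1
  rw [Complex.log]
  have hmne : (m : ℂ) ≠ 0 := Nat.cast_ne_zero.mpr hm
  push_cast
  field_simp

lemma gl_eq_neg (m : ℕ) (hm : m ≠ 0) (l : ℕ) (z : ℂ) (hz : z.im < 0) :
    Gl m l z = Complex.exp (2 * (Real.pi : ℂ) * Complex.I * (l + 1) / m + Complex.log z / m) := by
  have hz0 : z ≠ 0 := fun h => by simp [h] at hz
  have harg : argTwoPi z = z.arg + 2 * Real.pi := by
    rw [argTwoPi, if_neg (by simpa using Complex.arg_neg_iff.2 hz)]
  rw [Gl, rootBranch_eq_exp m z hz0, ← Complex.exp_nat_mul, ← Complex.exp_add, harg]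
  congr 1
  rw [Complex.log]
  have hmne : (m : ℂ) ≠ 0 := Nat.cast_ne_zero.mpr hm
  push_cast
  field_simp
  ring

lemma pow_form (m : ℕ) (a₁ a₂ : ℤ) (w z G : ℂ) (hz : z.im ≠ 0)
    (hw : G = Complex.exp (w + Complex.log z / m)) (hcw : (starRingEnd ℂ) w = -w) :
    G ^ (-a₁) * (starRingEnd ℂ) G ^ (-a₂) = fF m a₁ a₂ w z ((starRingEnd ℂ) z) := by
  have harg : z.arg ≠ Real.pi := by
    intro h
    rw [Complex.arg_eq_pi_iff] at h
    exact hz h.2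
  have hconj : (starRingEnd ℂ) G = Complex.exp (-w + Complex.log ((starRingEnd ℂ) z) / m) := by
    rw [hw, ← Complex.exp_conj]
    congr 1
    rw [map_add, hcw, map_div₀, Complex.log_conj z harg, map_natCast]
  rw [hconj, hw, ← Complex.exp_int_mul, ← Complex.exp_int_mul, ← Complex.exp_add, fF]
  congr 1
  push_cast
  ring

lemma fF_shift₁ (m : ℕ) (hm : (m:ℂ) ≠ 0) (a₁ a₂ : ℤ) (w z₁ z₂ : ℂ) (h1 : z₁ ≠ 0)
    (hmw : Complex.exp ((m : ℂ) * w) = 1) :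
    fF m (a₁ + m) a₂ w z₁ z₂ = fF m a₁ a₂ w z₁ z₂ / z₁ := by
  rw [eq_div_iff h1, fF, fF]
  nth_rewrite 2 [← Complex.exp_log h1]
  rw [← Complex.exp_add]
  rw [show (-(a₁:ℂ) * (w + Complex.log z₁ / m) + -(a₂:ℂ) * (-w + Complex.log z₂ / m))
      = ((-((a₁ + (m:ℤ) : ℤ)) : ℂ) * (w + Complex.log z₁ / m)
        + (-(a₂:ℂ)) * (-w + Complex.log z₂ / m) + Complex.log z₁) + (m:ℂ) * w from by
    push_cast; field_simp; ring]
  simp only [Complex.exp_add, hmw, mul_one]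

lemma fF_shift₂ (m : ℕ) (hm : (m:ℂ) ≠ 0) (a₁ a₂ : ℤ) (w z₁ z₂ : ℂ) (h2 : z₂ ≠ 0)
    (hmw : Complex.exp ((m : ℂ) * w) = 1) :
    fF m a₁ (a₂ + m) w z₁ z₂ = fF m a₁ a₂ w z₁ z₂ / z₂ := by
  have hmw' : Complex.exp (-((m:ℂ) * w)) = 1 := by rw [Complex.exp_neg, hmw, inv_one]
  rw [eq_div_iff h2, fF, fF]
  nth_rewrite 2 [← Complex.exp_log h2]
  rw [← Complex.exp_add]
  rw [show (-(a₁:ℂ) * (w + Complex.log z₁ / m) + -(a₂:ℂ) * (-w + Complex.log z₂ / m))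
      = ((-(a₁:ℂ)) * (w + Complex.log z₁ / m)
        + ((-((a₂ + (m:ℤ) : ℤ)) : ℂ)) * (-w + Complex.log z₂ / m) + Complex.log z₂)
        + -((m:ℂ) * w) from by
    push_cast; field_simp; ring]
  simp only [Complex.exp_add, hmw', mul_one]

lemma mem_slit_add (v s : ℝ) (hs : s ≠ 0) : ((v:ℂ) + Complex.I * s) ∈ Complex.slitPlane :=
  Or.inr (by simp [hs])

lemma mem_slit_sub (v s : ℝ) (hs : s ≠ 0) : ((v:ℂ) - Complex.I * s) ∈ Complex.slitPlane :=
  Or.inr (by simp [hs])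

lemma ne_zero_add (v s : ℝ) (hs : s ≠ 0) : ((v:ℂ) + Complex.I * s) ≠ 0 :=
  Complex.slitPlane_ne_zero (mem_slit_add v s hs)

lemma ne_zero_sub (v s : ℝ) (hs : s ≠ 0) : ((v:ℂ) - Complex.I * s) ≠ 0 :=
  Complex.slitPlane_ne_zero (mem_slit_sub v s hs)

lemma hasDerivAt_fF (m : ℕ) (a₁ a₂ : ℤ) (w : ℂ) (s : ℝ) (hs : s ≠ 0) (v : ℝ) :
    HasDerivAt (fun v : ℝ => fF m a₁ a₂ w ((v:ℂ) + Complex.I * s) ((v:ℂ) - Complex.I * s))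
      (fF m a₁ a₂ w ((v:ℂ) + Complex.I * s) ((v:ℂ) - Complex.I * s) *
        ((-a₁ : ℂ) * (((v:ℂ) + Complex.I * s)⁻¹ / m)
          + (-a₂ : ℂ) * (((v:ℂ) - Complex.I * s)⁻¹ / m))) v := by
  have hlog1 : HasDerivAt (fun ζ : ℂ => Complex.log (ζ + Complex.I * s))
      (((v:ℂ) + Complex.I * s)⁻¹) (v:ℂ) := by
    simpa [Function.comp_def] using (Complex.hasDerivAt_log (mem_slit_add v s hs)).comp (v:ℂ)
      ((hasDerivAt_id ((v:ℂ))).add_const (Complex.I * s))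
  have hlog2 : HasDerivAt (fun ζ : ℂ => Complex.log (ζ - Complex.I * s))
      (((v:ℂ) - Complex.I * s)⁻¹) (v:ℂ) := by
    simpa [Function.comp_def] using (Complex.hasDerivAt_log (mem_slit_sub v s hs)).comp (v:ℂ)
      ((hasDerivAt_id ((v:ℂ))).sub_const (Complex.I * s))
  have h1 : HasDerivAt (fun ζ : ℂ => (-a₁ : ℂ) * (w + Complex.log (ζ + Complex.I * s) / m))
      ((-a₁ : ℂ) * (((v:ℂ) + Complex.I * s)⁻¹ / m)) (v:ℂ) :=
    (((hlog1.div_const m).const_add w).const_mul _)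
  have h2 : HasDerivAt (fun ζ : ℂ => (-a₂ : ℂ) * (-w + Complex.log (ζ - Complex.I * s) / m))
      ((-a₂ : ℂ) * (((v:ℂ) - Complex.I * s)⁻¹ / m)) (v:ℂ) :=
    (((hlog2.div_const m).const_add (-w)).const_mul _)
  have hE := ((h1.add h2).cexp).comp_ofReal (z := v)
  simpa [fF] using hE

lemma continuous_fF (m : ℕ) (a₁ a₂ : ℤ) (w : ℂ) (s : ℝ) (hs : s ≠ 0) :
    Continuous (fun v : ℝ => fF m a₁ a₂ w ((v:ℂ) + Complex.I * s) ((v:ℂ) - Complex.I * s)) := by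
  have hc1 : Continuous (fun v : ℝ => Complex.log ((v:ℂ) + Complex.I * s)) := by
    rw [continuous_iff_continuousAt]
    intro v
    have hin : ContinuousAt (fun v : ℝ => (v:ℂ) + Complex.I * s) v := by fun_prop
    have h := (continuousAt_clog (mem_slit_add v s hs)).comp
      (f := fun v : ℝ => (v:ℂ) + Complex.I * s) (x := v) hin
    exact h
  have hc2 : Continuous (fun v : ℝ => Complex.log ((v:ℂ) - Complex.I * s)) := by
    rw [continuous_iff_continuousAt]
    intro v
    have hin : ContinuousAt (fun v : ℝ => (v:ℂ) - Complex.I * s) v := by fun_prop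
    have h := (continuousAt_clog (mem_slit_sub v s hs)).comp
      (f := fun v : ℝ => (v:ℂ) - Complex.I * s) (x := v) hin
    exact h
  simp only [fF]
  exact Complex.continuous_exp.comp
    (((continuous_const.mul (continuous_const.add (hc1.div_const _)))).add
      ((continuous_const.mul (continuous_const.add (hc2.div_const _)))))

lemma aux_div (m : ℕ) (hm : (m:ℂ) ≠ 0) (a₁ a₂ : ℤ) (c u v : ℂ) (hu : u ≠ 0) (hv : v ≠ 0) :
    (a₁:ℂ) * (c / u) + (a₂:ℂ) * (c / v)
      = -(m:ℂ) * (c * ((-a₁:ℂ) * (u⁻¹ / m) + (-a₂:ℂ) * (v⁻¹ / m))) := by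
  field_simp
  ring

lemma key_integral (m : ℕ) (hm : (m:ℂ) ≠ 0) (l : ℕ) (a₁ a₂ : ℤ) (w : ℂ) (s : ℝ) (hs : s ≠ 0)
    (hw : ∀ z : ℂ, z.im = s → Gl m l z = Complex.exp (w + Complex.log z / m))
    (hcw : (starRingEnd ℂ) w = -w) (hmw : Complex.exp ((m:ℂ) * w) = 1) :
    (a₁ : ℂ) * frakG m l (a₁ + m) a₂ 1 s + (a₂ : ℂ) * frakG m l a₁ (a₂ + m) 1 s
      = (m : ℂ) * (fF m a₁ a₂ w (-1 + Complex.I * s) (-1 - Complex.I * s)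
          - fF m a₁ a₂ w (1 + Complex.I * s) (1 - Complex.I * s)) := by
  have hconjz : ∀ v : ℝ, (starRingEnd ℂ) ((v:ℂ) + Complex.I * s) = (v:ℂ) - Complex.I * s := by
    intro v; simp [Complex.ext_iff]
  have himne : ∀ v : ℝ, ((v:ℂ) + Complex.I * s).im ≠ 0 := by
    intro v; simpa using hs
  -- rewrite the two integrals in exponential form
  have hGP : frakG m l (a₁ + m) a₂ 1 s
      = ∫ v in (-1:ℝ)..1, fF m (a₁ + m) a₂ w ((v:ℂ) + Complex.I * s) ((v:ℂ) - Complex.I * s) := by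
    rw [frakG]
    apply intervalIntegral.integral_congr
    intro v _
    beta_reduce
    rw [← hconjz v]
    exact pow_form m (a₁ + m) a₂ w _ _ (himne v) (hw _ (by simp)) hcw
  have hGQ : frakG m l a₁ (a₂ + m) 1 s
      = ∫ v in (-1:ℝ)..1, fF m a₁ (a₂ + m) w ((v:ℂ) + Complex.I * s) ((v:ℂ) - Complex.I * s) := by
    rw [frakG]
    apply intervalIntegral.integral_congr
    intro v _
    beta_reduce
    rw [← hconjz v]
    exact pow_form m a₁ (a₂ + m) w _ _ (himne v) (hw _ (by simp)) hcw
  set F : ℝ → ℂ := fun v => fF m a₁ a₂ w ((v:ℂ) + Complex.I * s) ((v:ℂ) - Complex.I * s) with hF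
  have hint : ∫ v in (-1:ℝ)..1,
      ((a₁ : ℂ) * fF m (a₁ + m) a₂ w ((v:ℂ) + Complex.I * s) ((v:ℂ) - Complex.I * s)
        + (a₂ : ℂ) * fF m a₁ (a₂ + m) w ((v:ℂ) + Complex.I * s) ((v:ℂ) - Complex.I * s))
      = (-(m:ℂ) * F 1) - (-(m:ℂ) * F (-1)) := by
    refine intervalIntegral.integral_eq_sub_of_hasDerivAt (f := fun v => -(m:ℂ) * F v) ?_ ?_
    · intro x _
      have hd := (hasDerivAt_fF m a₁ a₂ w s hs x).const_mul (-(m:ℂ))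
      refine hd.congr_deriv (Eq.symm ?_)
      rw [fF_shift₁ m hm a₁ a₂ w _ _ (ne_zero_add x s hs) hmw,
        fF_shift₂ m hm a₁ a₂ w _ _ (ne_zero_sub x s hs) hmw]
      have hu := ne_zero_add x s hs
      have hv := ne_zero_sub x s hs
      exact aux_div m hm a₁ a₂ _ _ _ hu hv
    · exact ((continuous_const.mul (continuous_fF m (a₁ + m) a₂ w s hs)).add
        (continuous_const.mul (continuous_fF m a₁ (a₂ + m) w s hs))).intervalIntegrable _ _
  rw [hGP, hGQ, ← intervalIntegral.integral_const_mul, ← intervalIntegral.integral_const_mul,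
    ← intervalIntegral.integral_add
        (f := fun v => (a₁ : ℂ) * fF m (a₁ + m) a₂ w ((v:ℂ) + Complex.I * s) ((v:ℂ) - Complex.I * s))
        (g := fun v => (a₂ : ℂ) * fF m a₁ (a₂ + m) w ((v:ℂ) + Complex.I * s) ((v:ℂ) - Complex.I * s))
      ((continuous_const.mul (continuous_fF m (a₁ + m) a₂ w s hs)).intervalIntegrable _ _)
      ((continuous_const.mul (continuous_fF m a₁ (a₂ + m) w s hs)).intervalIntegrable _ _),
    hint]
  have h1 : F 1 = fF m a₁ a₂ w (1 + Complex.I * s) (1 - Complex.I * s) := by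
    simp [hF]
  have h2 : F (-1) = fF m a₁ a₂ w (-1 + Complex.I * s) (-1 - Complex.I * s) := by
    simp [hF]
  rw [h1, h2]
  ring

lemma log_neg_of_im_neg (z : ℂ) (hz : z.im < 0) :
    Complex.log (-z) = Complex.log z + Real.pi * Complex.I := by
  rw [Complex.log, Complex.log, Complex.arg_neg_eq_arg_add_pi_of_im_neg hz, norm_neg]
  push_cast
  ring

lemma log_neg_of_im_pos (z : ℂ) (hz : 0 < z.im) :
    Complex.log (-z) = Complex.log z - Real.pi * Complex.I := by
  rw [Complex.log, Complex.log, Complex.arg_neg_eq_arg_sub_pi_of_im_pos hz, norm_neg]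
  push_cast
  ring

lemma analyticOn_aux (b₁ b₂ C : ℂ) (S : Set ℝ) :
    AnalyticOn ℝ (fun s : ℝ => Complex.exp
      (b₁ * Complex.log (1 + Complex.I * s) + b₂ * Complex.log (1 - Complex.I * s) + C)) S := by
  apply AnalyticOnNhd.analyticOn
  intro s _
  have h1 : (1 + Complex.I * (s:ℂ)) ∈ Complex.slitPlane := Or.inl (by simp)
  have h2 : (1 - Complex.I * (s:ℂ)) ∈ Complex.slitPlane := Or.inl (by simp)
  have hofReal : AnalyticAt ℝ (fun s : ℝ => (s : ℂ)) s := Complex.ofRealCLM.analyticAt s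
  have hin1 : AnalyticAt ℝ (fun s : ℝ => (1 : ℂ) + Complex.I * (s : ℂ)) s :=
    analyticAt_const.add (analyticAt_const.mul hofReal)
  have hin2 : AnalyticAt ℝ (fun s : ℝ => (1 : ℂ) - Complex.I * (s : ℂ)) s :=
    analyticAt_const.sub (analyticAt_const.mul hofReal)
  have hl1' := ((analyticAt_clog h1).restrictScalars (𝕜 := ℝ)).comp
    (f := fun s : ℝ => (1 : ℂ) + Complex.I * (s : ℂ)) (x := s) hin1
  have hl2' := ((analyticAt_clog h2).restrictScalars (𝕜 := ℝ)).comp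
    (f := fun s : ℝ => (1 : ℂ) - Complex.I * (s : ℂ)) (x := s) hin2
  have hl1 : AnalyticAt ℝ (fun s : ℝ => Complex.log (1 + Complex.I * s)) s := hl1'
  have hl2 : AnalyticAt ℝ (fun s : ℝ => Complex.log (1 - Complex.I * s)) s := hl2'
  have hexp : AnalyticAt ℝ (fun s : ℝ =>
      b₁ * Complex.log (1 + Complex.I * s) + b₂ * Complex.log (1 - Complex.I * s) + C) s :=
    ((analyticAt_const.mul hl1).add (analyticAt_const.mul hl2)).add analyticAt_const
  have hfinal' := (analyticAt_cexp.restrictScalars (𝕜 := ℝ)).comp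
    (f := fun s : ℝ => b₁ * Complex.log (1 + Complex.I * s)
      + b₂ * Complex.log (1 - Complex.I * s) + C) (x := s) hexp
  exact hfinal'

theorem stmt15 (m : ℕ) (hm : 2 ≤ m) (l : ℕ) (hl : l < m) (a₁ a₂ : ℤ) :
    (∀ s : ℝ, s ∈ Set.Icc (-1:ℝ) 1 → s ≠ 0 →
      (a₁ : ℂ) * frakG m l (a₁ + m) a₂ 1 s + (a₂ : ℂ) * frakG m l a₁ (a₂ + m) 1 s =
        (m : ℂ) *
          (Gl m l (-1 + Complex.I * (s : ℂ)) ^ (-a₁) *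
              (starRingEnd ℂ) (Gl m l (-1 + Complex.I * (s : ℂ))) ^ (-a₂) -
            Gl m l (1 + Complex.I * (s : ℂ)) ^ (-a₁) *
              (starRingEnd ℂ) (Gl m l (1 + Complex.I * (s : ℂ))) ^ (-a₂))) ∧
    (∃ g : ℝ → ℂ, AnalyticOn ℝ g (Set.Icc (0:ℝ) 1) ∧ ∀ s ∈ Set.Ioc (0:ℝ) 1,
      g s = (a₁ : ℂ) * frakG m l (a₁ + m) a₂ 1 s + (a₂ : ℂ) * frakG m l a₁ (a₂ + m) 1 s) ∧
    (∃ g : ℝ → ℂ, AnalyticOn ℝ g (Set.Icc (-1:ℝ) 0) ∧ ∀ s ∈ Set.Ico (-1:ℝ) 0,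
      g s = (a₁ : ℂ) * frakG m l (a₁ + m) a₂ 1 s + (a₂ : ℂ) * frakG m l a₁ (a₂ + m) 1 s) := by
  have hm0 : m ≠ 0 := by omega
  have hmC : (m : ℂ) ≠ 0 := Nat.cast_ne_zero.mpr hm0
  set wP : ℂ := 2 * (Real.pi : ℂ) * Complex.I * l / m with hwPdef
  set wN : ℂ := 2 * (Real.pi : ℂ) * Complex.I * (l + 1) / m with hwNdef
  have hcwP : (starRingEnd ℂ) wP = -wP := by
    rw [hwPdef]
    simp only [map_div₀, map_mul, Complex.conj_I, map_ofNat, Complex.conj_ofReal, map_natCast]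
    ring
  have hcwN : (starRingEnd ℂ) wN = -wN := by
    rw [hwNdef]
    simp only [map_div₀, map_mul, map_add, map_one, Complex.conj_I, map_ofNat,
      Complex.conj_ofReal, map_natCast]
    ring
  have hmwP : Complex.exp ((m:ℂ) * wP) = 1 := by
    rw [show (m:ℂ) * wP = (l : ℕ) * (2 * Real.pi * Complex.I) from by
      rw [hwPdef]; field_simp]
    exact Complex.exp_nat_mul_two_pi_mul_I l
  have hmwN : Complex.exp ((m:ℂ) * wN) = 1 := by
    rw [show (m:ℂ) * wN = ((l + 1 : ℕ)) * (2 * Real.pi * Complex.I) from by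
      rw [hwNdef]; push_cast; field_simp]
    exact Complex.exp_nat_mul_two_pi_mul_I (l + 1)
  have hwpos : ∀ s : ℝ, 0 < s → ∀ z : ℂ, z.im = s →
      Gl m l z = Complex.exp (wP + Complex.log z / m) := by
    intro s hs z hz
    exact gl_eq_pos m hm0 l z (by rw [hz]; exact hs)
  have hwneg : ∀ s : ℝ, s < 0 → ∀ z : ℂ, z.im = s →
      Gl m l z = Complex.exp (wN + Complex.log z / m) := by
    intro s hs z hz
    exact gl_eq_neg m hm0 l z (by rw [hz]; exact hs)
  have keypos : ∀ s : ℝ, 0 < s →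
      (a₁ : ℂ) * frakG m l (a₁ + m) a₂ 1 s + (a₂ : ℂ) * frakG m l a₁ (a₂ + m) 1 s
        = (m : ℂ) * (fF m a₁ a₂ wP (-1 + Complex.I * s) (-1 - Complex.I * s)
            - fF m a₁ a₂ wP (1 + Complex.I * s) (1 - Complex.I * s)) := by
    intro s hs
    exact key_integral m hmC l a₁ a₂ wP s hs.ne' (hwpos s hs) hcwP hmwP
  have keyneg : ∀ s : ℝ, s < 0 →
      (a₁ : ℂ) * frakG m l (a₁ + m) a₂ 1 s + (a₂ : ℂ) * frakG m l a₁ (a₂ + m) 1 s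
        = (m : ℂ) * (fF m a₁ a₂ wN (-1 + Complex.I * s) (-1 - Complex.I * s)
            - fF m a₁ a₂ wN (1 + Complex.I * s) (1 - Complex.I * s)) := by
    intro s hs
    exact key_integral m hmC l a₁ a₂ wN s hs.ne (hwneg s hs) hcwN hmwN
  have hconj1 : ∀ s : ℝ, (starRingEnd ℂ) (-1 + Complex.I * (s:ℂ)) = -1 - Complex.I * s := by
    intro s; simp [Complex.ext_iff]
  have hconj2 : ∀ s : ℝ, (starRingEnd ℂ) (1 + Complex.I * (s:ℂ)) = 1 - Complex.I * s := by
    intro s; simp [Complex.ext_iff]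
  refine ⟨?_, ?_, ?_⟩
  · -- part 1
    intro s _ hs
    have him1 : ((-1 : ℂ) + Complex.I * s).im = s := by simp
    have him2 : ((1 : ℂ) + Complex.I * s).im = s := by simp
    rcases hs.lt_or_gt with hneg | hpos
    · rw [show (Gl m l (-1 + Complex.I * (s : ℂ)) ^ (-a₁) *
          (starRingEnd ℂ) (Gl m l (-1 + Complex.I * (s : ℂ))) ^ (-a₂))
          = fF m a₁ a₂ wN (-1 + Complex.I * s) (-1 - Complex.I * s) from by
        rw [← hconj1 s]
        exact pow_form m a₁ a₂ wN _ _ (by rw [him1]; exact hs) (hwneg s hneg _ him1) hcwN,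
        show (Gl m l (1 + Complex.I * (s : ℂ)) ^ (-a₁) *
          (starRingEnd ℂ) (Gl m l (1 + Complex.I * (s : ℂ))) ^ (-a₂))
          = fF m a₁ a₂ wN (1 + Complex.I * s) (1 - Complex.I * s) from by
        rw [← hconj2 s]
        exact pow_form m a₁ a₂ wN _ _ (by rw [him2]; exact hs) (hwneg s hneg _ him2) hcwN]
      exact keyneg s hneg
    · rw [show (Gl m l (-1 + Complex.I * (s : ℂ)) ^ (-a₁) *
          (starRingEnd ℂ) (Gl m l (-1 + Complex.I * (s : ℂ))) ^ (-a₂))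
          = fF m a₁ a₂ wP (-1 + Complex.I * s) (-1 - Complex.I * s) from by
        rw [← hconj1 s]
        exact pow_form m a₁ a₂ wP _ _ (by rw [him1]; exact hs) (hwpos s hpos _ him1) hcwP,
        show (Gl m l (1 + Complex.I * (s : ℂ)) ^ (-a₁) *
          (starRingEnd ℂ) (Gl m l (1 + Complex.I * (s : ℂ))) ^ (-a₂))
          = fF m a₁ a₂ wP (1 + Complex.I * s) (1 - Complex.I * s) from by
        rw [← hconj2 s]
        exact pow_form m a₁ a₂ wP _ _ (by rw [him2]; exact hs) (hwpos s hpos _ him2) hcwP]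
      exact keypos s hpos
  · -- part 2 : analytic extension on [0,1]
    refine ⟨fun s : ℝ => (m : ℂ) *
      (Complex.exp ((-a₂ : ℂ) / m * Complex.log (1 + Complex.I * s)
          + (-a₁ : ℂ) / m * Complex.log (1 - Complex.I * s)
          + ((-a₁ : ℂ) * wP + (-a₂ : ℂ) * (-wP)
            + ((-a₁ : ℂ) * (Real.pi * Complex.I) + (-a₂ : ℂ) * (-(Real.pi * Complex.I))) / m))
        - Complex.exp ((-a₁ : ℂ) / m * Complex.log (1 + Complex.I * s)
          + (-a₂ : ℂ) / m * Complex.log (1 - Complex.I * s)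
          + ((-a₁ : ℂ) * wP + (-a₂ : ℂ) * (-wP)))), ?_, ?_⟩
    · exact (analyticOn_const.mul ((analyticOn_aux _ _ _ _).sub (analyticOn_aux _ _ _ _)))
    · intro s hsmem
      have hs : 0 < s := hsmem.1
      rw [keypos s hs]
      have hlogA : Complex.log (-1 + Complex.I * (s:ℂ))
          = Complex.log (1 - Complex.I * s) + Real.pi * Complex.I := by
        rw [show ((-1 : ℂ) + Complex.I * s) = -(1 - Complex.I * s) from by ring]
        exact log_neg_of_im_neg _ (by simp [hs])
      have hlogB : Complex.log (-1 - Complex.I * (s:ℂ))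
          = Complex.log (1 + Complex.I * s) - Real.pi * Complex.I := by
        rw [show ((-1 : ℂ) - Complex.I * s) = -(1 + Complex.I * s) from by ring]
        exact log_neg_of_im_pos _ (by simp [hs])
      simp only [fF, hlogA, hlogB]
      congr 1
      congr 1
      · congr 1
        ring
      · congr 1
        ring
  · -- part 3 : analytic extension on [-1,0]
    refine ⟨fun s : ℝ => (m : ℂ) *
      (Complex.exp ((-a₂ : ℂ) / m * Complex.log (1 + Complex.I * s)
          + (-a₁ : ℂ) / m * Complex.log (1 - Complex.I * s)
          + ((-a₁ : ℂ) * wN + (-a₂ : ℂ) * (-wN)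
            + ((-a₁ : ℂ) * (-(Real.pi * Complex.I)) + (-a₂ : ℂ) * (Real.pi * Complex.I)) / m))
        - Complex.exp ((-a₁ : ℂ) / m * Complex.log (1 + Complex.I * s)
          + (-a₂ : ℂ) / m * Complex.log (1 - Complex.I * s)
          + ((-a₁ : ℂ) * wN + (-a₂ : ℂ) * (-wN)))), ?_, ?_⟩
    · exact (analyticOn_const.mul ((analyticOn_aux _ _ _ _).sub (analyticOn_aux _ _ _ _)))
    · intro s hsmem
      have hs : s < 0 := hsmem.2
      rw [keyneg s hs]
      have hlogA : Complex.log (-1 + Complex.I * (s:ℂ))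
          = Complex.log (1 - Complex.I * s) - Real.pi * Complex.I := by
        rw [show ((-1 : ℂ) + Complex.I * s) = -(1 - Complex.I * s) from by ring]
        exact log_neg_of_im_pos _ (by simp [hs])
      have hlogB : Complex.log (-1 - Complex.I * (s:ℂ))
          = Complex.log (1 + Complex.I * s) + Real.pi * Complex.I := by
        rw [show ((-1 : ℂ) - Complex.I * s) = -(1 + Complex.I * s) from by ring]
        exact log_neg_of_im_neg _ (by simp [hs])
      simp only [fF, hlogA, hlogB]
      congr 1
      congr 1
      · congr 1
        ring
      · congr 1
        ring
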